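/- For every y in (-1,1), the logarithmic potential of the arcsine law satisfies (1/π) ∫_{-1}^{1} log|x - y| / √(1 - x²) dx = -log 2. -/

import Mathlib

open Real Set MeasureTheory intervalIntegral

noncomputable def G (x : ℝ) : ℝ := Real.log |Real.sin x|

lemma log_le_two_rpow {x : ℝ} (hx : 0 < x) : -Real.log x ≤ 2 * x ^ (-(1:ℝ)/2) := by
  have h1 : Real.log (x ^ (-(1:ℝ)/2)) ≤ x ^ (-(1:ℝ)/2) - 1 :=
    Real.log_le_sub_one_of_pos (Real.rpow_pos_of_pos hx _)
  rw [Real.log_rpow hx] at h1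
  nlinarith [Real.rpow_pos_of_pos hx (-(1:ℝ)/2)]

lemma intInt_log01 : IntervalIntegrable Real.log volume 0 1 := by
  rw [intervalIntegrable_iff, uIoc_of_le zero_le_one]
  apply Integrable.mono' ((intervalIntegral.intervalIntegrable_rpow' (r := -(1:ℝ)/2)
    (a := 0) (b := 1) (by norm_num)).const_mul 2).1
  · exact Real.measurable_log.aestronglyMeasurable
  · filter_upwards [ae_restrict_mem measurableSet_Ioc] with x hx
    have hx0 : 0 < x := hx.1
    have hlog : Real.log x ≤ 0 := Real.log_nonpos hx0.le hx.2
    rw [Real.norm_eq_abs, abs_of_nonpos hlog]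
    exact log_le_two_rpow hx0

lemma intInt_log0c {c : ℝ} (hc : 1 ≤ c) : IntervalIntegrable Real.log volume 0 c := by
  refine intInt_log01.trans (ContinuousOn.intervalIntegrable ?_)
  apply Real.continuousOn_log.mono
  intro x hx
  rw [uIcc_of_le hc] at hx
  simp only [mem_compl_iff, mem_singleton_iff]
  exact (lt_of_lt_of_le one_pos hx.1).ne'

lemma G_pi_sub (x : ℝ) : G (π - x) = G x := by simp [G, Real.sin_pi_sub]
lemma G_neg (x : ℝ) : G (-x) = G x := by simp [G]
lemma G_per : Function.Periodic G π := fun x => by simp [G, Real.sin_add_pi]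

lemma G_int_half : IntervalIntegrable G volume 0 (π/2) := by
  have hπ : (1:ℝ) ≤ π/2 := by linarith [Real.pi_gt_three]
  rw [intervalIntegrable_iff, uIoc_of_le (by linarith : (0:ℝ) ≤ π/2)]
  apply Integrable.mono' (((intInt_log0c hπ).1.abs).add (integrable_const (Real.log (π/2))))
  · exact (Real.measurable_log.comp (Real.measurable_sin.abs)).aestronglyMeasurable
  · filter_upwards [ae_restrict_mem measurableSet_Ioc] with x hx
    have hx0 : 0 < x := hx.1
    have hs : 0 < Real.sin x := Real.sin_pos_of_pos_of_lt_pi hx0 (by linarith [hx.2, Real.pi_pos])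
    have h1 : Real.log (Real.sin x) ≤ Real.log x := Real.log_le_log hs (Real.sin_le hx0.le)
    have h2 : Real.log x - Real.log (π/2) ≤ Real.log (Real.sin x) := by
      have : 2/π * x ≤ Real.sin x := Real.mul_le_sin hx0.le hx.2
      have h3 : Real.log (2/π * x) ≤ Real.log (Real.sin x) :=
        Real.log_le_log (by positivity) this
      have h4 : Real.log (2/π * x) = Real.log x - Real.log (π/2) := by
        rw [Real.log_mul (by positivity) hx0.ne', Real.log_div two_ne_zero
          (Real.pi_ne_zero), Real.log_div Real.pi_ne_zero two_ne_zero]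
        ring
      linarith
    have hlogpi : 0 ≤ Real.log (π/2) := Real.log_nonneg hπ
    simp only [G, Real.norm_eq_abs, Pi.add_apply, abs_of_pos hs]
    rw [abs_le]
    constructor
    · have := neg_abs_le (Real.log x); linarith
    · have := le_abs_self (Real.log x); linarith

lemma G_int_0pi : IntervalIntegrable G volume 0 π := by
  refine G_int_half.trans ?_
  have h := (G_int_half.comp_sub_left π).symm
  have he : (fun x => G (π - x)) = G := funext G_pi_sub
  rw [he] at h
  simpa [sub_half] using h

lemma G_int_big : IntervalIntegrable G volume (-π) (2*π) := by
  have h1 : IntervalIntegrable G volume (-π) 0 := by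
    have h := G_int_0pi.comp_add_right π
    have he : (fun x => G (x + π)) = G := funext fun x => G_per x
    rw [he] at h
    simpa using h
  have h2 : IntervalIntegrable G volume π (2*π) := by
    have h := G_int_0pi.comp_sub_right π
    have he : (fun x => G (x - π)) = G := funext fun x => by
      rw [← G_per (x - π)]; ring_nf
    rw [he] at h
    simpa [two_mul] using h
  exact (h1.trans G_int_0pi).trans h2

lemma G_int {a b : ℝ} (h1 : -π ≤ a) (h2 : a ≤ 2*π) (h3 : -π ≤ b) (h4 : b ≤ 2*π) :
    IntervalIntegrable G volume a b := by
  apply G_int_big.mono_set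
  rw [uIcc_of_le (by linarith [Real.pi_pos] : -π ≤ 2*π)]
  exact uIcc_subset_Icc ⟨h1, h2⟩ ⟨h3, h4⟩


lemma G_integral_0pi : ∫ x in (0:ℝ)..π, G x = -π * Real.log 2 := by
  have hpi := Real.pi_pos
  have hint1 : IntervalIntegrable G volume 0 (π/2) := G_int (by linarith) (by linarith) (by linarith) (by linarith)
  have hint2 : IntervalIntegrable G volume (π/2) π := G_int (by linarith) (by linarith) (by linarith) (by linarith)
  set J := ∫ x in (0:ℝ)..π/2, G x with hJ
  set L := ∫ x in (0:ℝ)..π, G x with hL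
  -- second half equals first half
  have hsym : ∫ x in (π/2:ℝ)..π, G x = J := by
    have h := intervalIntegral.integral_comp_sub_left (a := 0) (b := π/2) G π
    rw [funext G_pi_sub] at h
    rw [show intervalIntegral G 0 (π/2) volume = J from rfl] at h
    rw [show (π - π/2 : ℝ) = π/2 by ring, sub_zero] at h
    exact h.symm
  have hL2J : L = 2 * J := by
    rw [hL, ← intervalIntegral.integral_add_adjacent_intervals hint1 hint2, hsym]; ring
  -- doubling
  have hdou : ∫ x in (0:ℝ)..π/2, G (2*x) = 2⁻¹ * L := by
    have h := intervalIntegral.integral_comp_mul_left (a := 0) (b := π/2) G (two_ne_zero)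
    rw [h, show (2 * (π/2) : ℝ) = π by ring]
    norm_num [hL]
  have hcos : ∫ x in (0:ℝ)..π/2, G (π/2 - x) = J := by
    have h := intervalIntegral.integral_comp_sub_left (a := 0) (b := π/2) G (π/2)
    rw [h]
    norm_num [hJ]
  have hsplit : ∫ x in (0:ℝ)..π/2, G (2*x)
      = ∫ x in (0:ℝ)..π/2, (Real.log 2 + G x + G (π/2 - x)) := by
    apply intervalIntegral.integral_congr_ae
    have h0 : volume ({0, π/2} : Set ℝ) = 0 :=
      ((Set.finite_singleton _).insert _).measure_zero _
    filter_upwards [compl_mem_ae_iff.2 h0] with x hx hmem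
    simp only [mem_compl_iff, mem_insert_iff, mem_singleton_iff, not_or] at hx
    rw [uIoc_of_le (by linarith : (0:ℝ) ≤ π/2)] at hmem
    have hx0 : 0 < x := hmem.1
    have hxlt : x < π/2 := lt_of_le_of_ne hmem.2 hx.2
    have hs : 0 < Real.sin x := Real.sin_pos_of_pos_of_lt_pi hx0 (by linarith)
    have hc : 0 < Real.cos x := Real.cos_pos_of_mem_Ioo ⟨by linarith, hxlt⟩
    have h2 : G (2*x) = Real.log 2 + Real.log (Real.sin x) + Real.log (Real.cos x) := by
      rw [G, Real.sin_two_mul, abs_of_pos (by positivity)]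
      rw [Real.log_mul (by positivity) hc.ne', Real.log_mul two_ne_zero hs.ne']
    rw [h2, G, G, Real.sin_pi_div_two_sub, abs_of_pos hs, abs_of_pos hc]
  have hintc : IntervalIntegrable (fun x => G (π/2 - x)) volume 0 (π/2) := by
    have h := hint1.comp_sub_left (π/2)
    simpa [sub_half] using h.symm
  have hsum : ∫ x in (0:ℝ)..π/2, (Real.log 2 + G x + G (π/2 - x))
      = (π/2) * Real.log 2 + J + J := by
    rw [intervalIntegral.integral_add ((_root_.intervalIntegrable_const (c := Real.log 2) (μ := volume)).add hint1) hintc,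
      intervalIntegral.integral_add (_root_.intervalIntegrable_const (c := Real.log 2) (μ := volume)) hint1, hcos]
    simp only [intervalIntegral.integral_const, smul_eq_mul, sub_zero, ← hJ]
  have : 2⁻¹ * L = (π/2) * Real.log 2 + J + J := by rw [← hdou, hsplit, hsum]
  rw [hL2J] at this ⊢
  linarith


lemma sin_ne_zero_of_mem {t : ℝ} (h1 : -π < t) (h2 : t < π) (h3 : t ≠ 0) : Real.sin t ≠ 0 := by
  rcases lt_or_gt_of_ne h3 with h | h
  · exact ne_of_lt (Real.sin_neg_of_neg_of_neg_pi_lt h h1)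
  · exact ne_of_gt (Real.sin_pos_of_pos_of_lt_pi h h2)

lemma theta_integral {y : ℝ} (hy : y ∈ Set.Ioo (-1:ℝ) 1) :
    ∫ θ in (0:ℝ)..π, Real.log |Real.cos θ - y| = -π * Real.log 2 := by
  have hpi := Real.pi_pos
  set φ := Real.arccos y with hφ
  have hφ0 : 0 < φ := Real.arccos_pos.2 hy.2
  have hφπ : φ < π := lt_of_le_of_ne (Real.arccos_le_pi y)
    (fun h => absurd (Real.arccos_eq_pi.1 h) (by linarith [hy.1]))
  have hyc : Real.cos φ = y := Real.cos_arccos hy.1.le hy.2.le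
  -- integrability of the two shifted pieces
  have hI1 : IntervalIntegrable (fun θ => G ((1/2)*θ + φ/2)) volume 0 π := by
    have h1 : IntervalIntegrable G volume (φ/2) (π/2 + φ/2) :=
      G_int (by linarith) (by linarith) (by linarith) (by linarith)
    have h2 := h1.comp_add_right (φ/2)
    have h3 := h2.comp_mul_left (c := 1/2)
    have he : (fun x => (fun u => G (u + φ/2)) (1/2 * x)) = fun θ => G ((1/2)*θ + φ/2) := rfl
    rw [he] at h3
    have e1 : (φ/2 - φ/2) / (1/2) = (0:ℝ) := by ring
    have e2 : (π/2 + φ/2 - φ/2) / (1/2) = π := by ring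
    rwa [e1, e2] at h3
  have hI2 : IntervalIntegrable (fun θ => G ((1/2)*θ - φ/2)) volume 0 π := by
    have h1 : IntervalIntegrable G volume (-(φ/2)) (π/2 - φ/2) :=
      G_int (by linarith) (by linarith) (by linarith) (by linarith)
    have h2 := h1.comp_sub_right (φ/2)
    have h3 := h2.comp_mul_left (c := 1/2)
    have he : (fun x => (fun u => G (u - φ/2)) (1/2 * x)) = fun θ => G ((1/2)*θ - φ/2) := rfl
    rw [he] at h3
    have e1 : (-(φ/2) + φ/2) / (1/2) = (0:ℝ) := by ring
    have e2 : (π/2 - φ/2 + φ/2) / (1/2) = π := by ring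
    rwa [e1, e2] at h3
  -- pointwise identity a.e.
  have hcongr : ∫ θ in (0:ℝ)..π, Real.log |Real.cos θ - y|
      = ∫ θ in (0:ℝ)..π, (Real.log 2 + G ((1/2)*θ + φ/2) + G ((1/2)*θ - φ/2)) := by
    apply intervalIntegral.integral_congr_ae
    have h0 : volume ({φ} : Set ℝ) = 0 := measure_singleton φ
    filter_upwards [compl_mem_ae_iff.2 h0] with θ hθ hmem
    simp only [mem_compl_iff, mem_singleton_iff] at hθ
    rw [uIoc_of_le (by linarith : (0:ℝ) ≤ π)] at hmem
    have hθ0 : 0 < θ := hmem.1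
    have hθπ : θ ≤ π := hmem.2
    have hs1 : Real.sin ((θ + φ)/2) ≠ 0 :=
      ne_of_gt (Real.sin_pos_of_pos_of_lt_pi (by linarith) (by linarith))
    have hs2 : Real.sin ((θ - φ)/2) ≠ 0 := by
      apply sin_ne_zero_of_mem (by linarith) (by linarith)
      intro h
      apply hθ
      have : θ - φ = 0 := by linarith [congrArg (· * 2) h]
      linarith
    have hkey : Real.cos θ - y = -2 * Real.sin ((θ + φ)/2) * Real.sin ((θ - φ)/2) := by
      rw [← hyc, Real.cos_sub_cos]
    rw [hkey, abs_mul, abs_mul]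
    rw [show |(-2:ℝ)| = 2 by norm_num]
    rw [Real.log_mul (by positivity) (abs_ne_zero.2 hs2),
        Real.log_mul two_ne_zero (abs_ne_zero.2 hs1)]
    have e1 : (1/2)*θ + φ/2 = (θ + φ)/2 := by ring
    have e2 : (1/2)*θ - φ/2 = (θ - φ)/2 := by ring
    rw [e1, e2]
    rfl
  -- values of the two pieces
  have hv1 : ∫ θ in (0:ℝ)..π, G ((1/2)*θ + φ/2)
      = 2 * ∫ x in (φ/2)..(φ/2 + π/2), G x := by
    have h := intervalIntegral.integral_comp_mul_add (a := 0) (b := π) G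
      (c := (1/2:ℝ)) (by norm_num) (φ/2)
    rw [h]
    rw [show ((1:ℝ)/2 * 0 + φ/2) = φ/2 by ring, show ((1:ℝ)/2 * π + φ/2) = φ/2 + π/2 by ring]
    norm_num [smul_eq_mul]
  have hv2 : ∫ θ in (0:ℝ)..π, G ((1/2)*θ - φ/2)
      = 2 * ∫ x in (φ/2 + π/2)..(φ/2 + π), G x := by
    have h := intervalIntegral.integral_comp_mul_add (a := 0) (b := π) G
      (c := (1/2:ℝ)) (by norm_num) (-(φ/2))
    have he : (fun θ => G ((1/2)*θ - φ/2)) = fun θ => G ((1/2)*θ + -(φ/2)) := by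
      funext θ; rw [sub_eq_add_neg]
    rw [he, h]
    rw [show ((1:ℝ)/2 * 0 + -(φ/2)) = -(φ/2) by ring,
        show ((1:ℝ)/2 * π + -(φ/2)) = π/2 - φ/2 by ring]
    -- transform by evenness and periodicity
    have e1 : ∫ x in (-(φ/2))..(π/2 - φ/2), G x = ∫ x in (φ/2 - π/2)..(φ/2), G x := by
      have h2 := intervalIntegral.integral_comp_neg (a := φ/2 - π/2) (b := φ/2) G
      rw [funext G_neg] at h2
      rw [show -(φ/2 - π/2) = π/2 - φ/2 by ring] at h2
      exact h2.symm
    have e2 : ∫ x in (φ/2 - π/2)..(φ/2), G x = ∫ x in (φ/2 + π/2)..(φ/2 + π), G x := by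
      have h3 := intervalIntegral.integral_comp_add_right (a := φ/2 - π/2) (b := φ/2) G π
      rw [funext (fun x => G_per x)] at h3
      rw [show (φ/2 - π/2 + π) = φ/2 + π/2 by ring] at h3
      exact h3
    rw [e1, e2]
    norm_num [smul_eq_mul]
  -- adjacency and periodicity
  have ha : IntervalIntegrable G volume (φ/2) (φ/2 + π/2) :=
    G_int (by linarith) (by linarith) (by linarith) (by linarith)
  have hb : IntervalIntegrable G volume (φ/2 + π/2) (φ/2 + π) :=
    G_int (by linarith) (by linarith) (by linarith) (by linarith)
  have hper : ∫ x in (φ/2)..(φ/2 + π), G x = -π * Real.log 2 := by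
    have h := G_per.intervalIntegral_add_eq (φ/2) 0
    rw [h, zero_add, G_integral_0pi]
  have hadj : (∫ x in (φ/2)..(φ/2 + π/2), G x) + ∫ x in (φ/2 + π/2)..(φ/2 + π), G x
      = -π * Real.log 2 := by
    rw [intervalIntegral.integral_add_adjacent_intervals ha hb]
    exact hper
  rw [hcongr, intervalIntegral.integral_add
      ((_root_.intervalIntegrable_const (c := Real.log 2) (μ := volume)).add hI1) hI2,
    intervalIntegral.integral_add (_root_.intervalIntegrable_const (c := Real.log 2) (μ := volume)) hI1,
    hv1, hv2]
  simp only [intervalIntegral.integral_const, smul_eq_mul, sub_zero]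
  linarith [hadj]


lemma cos_image_Ioo : Real.cos '' Set.Ioo 0 π = Set.Ioo (-1:ℝ) 1 := by
  have hpi := Real.pi_pos
  ext x
  constructor
  · rintro ⟨θ, hθ, rfl⟩
    constructor
    · have h := Real.strictAntiOn_cos ⟨hθ.1.le, hθ.2.le⟩ ⟨hpi.le, le_refl π⟩ hθ.2
      rwa [Real.cos_pi] at h
    · have h := Real.strictAntiOn_cos ⟨le_refl 0, hpi.le⟩ ⟨hθ.1.le, hθ.2.le⟩ hθ.1
      rwa [Real.cos_zero] at h
  · intro hx
    refine ⟨Real.arccos x, ⟨Real.arccos_pos.2 hx.2, ?_⟩, Real.cos_arccos hx.1.le hx.2.le⟩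
    exact lt_of_le_of_ne (Real.arccos_le_pi x)
      (fun h => absurd (Real.arccos_eq_pi.1 h) (by linarith [hx.1]))

/-- Logarithmic potential of the arcsine law: for `y ∈ (-1,1)`,
`(1/π) ∫_{-1}^1 log |x - y| / √(1-x²) dx = -log 2`. -/
theorem arcsine_log_potential (y : ℝ) (hy : y ∈ Set.Ioo (-1 : ℝ) 1) :
    (1 / Real.pi) * ∫ x in (-1 : ℝ)..1, Real.log |x - y| / Real.sqrt (1 - x ^ 2)
      = -Real.log 2 := by
  have hpi := Real.pi_pos
  have key : (∫ x in (-1 : ℝ)..1, Real.log |x - y| / Real.sqrt (1 - x ^ 2))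
      = -π * Real.log 2 := by
    rw [intervalIntegral.integral_of_le (by norm_num : (-1:ℝ) ≤ 1),
      MeasureTheory.integral_Ioc_eq_integral_Ioo, ← cos_image_Ioo,
      integral_image_eq_integral_abs_deriv_smul measurableSet_Ioo
        (fun x _ => (Real.hasDerivAt_cos x).hasDerivWithinAt) (Real.injOn_cos.mono Set.Ioo_subset_Icc_self)]
    rw [MeasureTheory.setIntegral_congr_fun measurableSet_Ioo
      (g := fun θ => Real.log |Real.cos θ - y|) ?_]
    · rw [← MeasureTheory.integral_Ioc_eq_integral_Ioo,
        ← intervalIntegral.integral_of_le hpi.le]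
      exact theta_integral hy
    · intro θ hθ
      have hs : 0 < Real.sin θ := Real.sin_pos_of_pos_of_lt_pi hθ.1 hθ.2
      have h1 : Real.sqrt (1 - Real.cos θ ^ 2) = Real.sin θ := by
        rw [← Real.sin_sq, Real.sqrt_sq hs.le]
      simp only [smul_eq_mul, abs_neg, abs_of_pos hs, h1]
      rw [mul_div_cancel₀ _ hs.ne']
  rw [key]
  field_simp
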